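/- Let α, α′ be irrational real numbers with convergents pₙ/qₙ, p′ₙ/q′ₙ. For indices k, l, m set a_n = q_{k}q′_{l−1} − q_{k−1}q′_{l}, b_n = q_{k}p′_{l−1} − q_{k−1}p′_{l}, c_n = p_{k}q′_{l−1} − p_{k−1}q′_{l}, d_n = p_{k}p′_{l−1} − p_{k−1}p′_{l}. If the partial quotients of α in positions k+1,…,k+m agree with those of α′ in positions l+1,…,l+m, then |αα′·a_n − α·b_n − α′·c_n + d_n| < 2/(q_{k+m}·q′_{l+m}). -/

import Mathlib

/-- `a` is the continued fraction expansion of `α` (via the Gauss map):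
`a n = ⌊x n⌋` where `x 0 = α` and `x (n+1) = 1/(x n - ⌊x n⌋)`. -/
def IsCFOf (α : ℝ) (a : ℕ → ℤ) : Prop :=
  ∃ x : ℕ → ℝ, x 0 = α ∧ (∀ n, a n = ⌊x n⌋) ∧ ∀ n, x (n + 1) = 1 / (x n - ⌊x n⌋)

/-- `p n`, `q n` are the convergent numerators/denominators of the continued
fraction with partial quotients `a`, shifted by one: `p (n+1)/q (n+1)` is the
`n`-th convergent `pₙ/qₙ`, and `p 0 = p₋₁ = 1`, `q 0 = q₋₁ = 0`. -/
def IsConvergentsOf (a : ℕ → ℤ) (p q : ℕ → ℤ) : Prop :=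
  p 0 = 1 ∧ p 1 = a 0 ∧ (∀ n, p (n + 2) = a (n + 1) * p (n + 1) + p n) ∧
  q 0 = 0 ∧ q 1 = 1 ∧ (∀ n, q (n + 2) = a (n + 1) * q (n + 1) + q n)

private lemma cf_helper (xx F Eabs Q Qn : ℝ) (hF : F ≠ 0)
    (hprod : Eabs * (xx * Q + Qn) = 1) :
    F * Eabs * (1/F * ((xx - F) * Q + Qn) + Q) = 1 := by
  field_simp
  linear_combination hprod

theorem cf_facts {α : ℝ} (hα : Irrational α) {a p q : ℕ → ℤ}
    (hcf : IsCFOf α a) (h : IsConvergentsOf a p q) :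
    (∀ n, 1 ≤ q (n+1)) ∧ (∀ n, q (n+1) ≤ q (n+2)) ∧
    (∀ n, |α * (q (n+1):ℝ) - (p (n+1):ℝ)| < 1 / ((q (n+2):ℝ))) := by
  obtain ⟨x, hx0, ha, hxr⟩ := hcf
  obtain ⟨p0, p1, prec, q0, q1, qrec⟩ := h
  -- irrationality of all complete quotients
  have hxirr : ∀ n, Irrational (x n) := by
    intro n
    induction n with
    | zero => rwa [hx0]
    | succ n ih =>
      rw [hxr, one_div]
      exact ((Irrational.sub_intCast ih ⌊x n⌋).inv)
  have hfrac : ∀ n, 0 < x n - (⌊x n⌋:ℝ) := by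
    intro n
    have h1 : (⌊x n⌋:ℝ) ≤ x n := Int.floor_le (x n)
    have h2 : x n ≠ (⌊x n⌋:ℝ) := (hxirr n).ne_int ⌊x n⌋
    cases h1.lt_or_eq with
    | inl h => linarith
    | inr h => exact absurd h.symm h2
  have hfrac1 : ∀ n, x n - (⌊x n⌋:ℝ) < 1 := by
    intro n
    have := Int.lt_floor_add_one (x n)
    linarith
  have hx1 : ∀ n, 1 < x (n+1) := by
    intro n
    rw [hxr, lt_div_iff₀ (hfrac n)]
    have := hfrac1 n; linarith
  have ha1 : ∀ n, 1 ≤ a (n+1) := by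
    intro n
    rw [ha]
    exact Int.le_floor.mpr (by exact_mod_cast (hx1 n).le)
  have hq' : ∀ n, 0 ≤ q n ∧ 1 ≤ q (n+1) := by
    intro n
    induction n with
    | zero => simp [q0, q1]
    | succ n ih =>
      refine ⟨by linarith [ih.2], ?_⟩
      rw [qrec]
      nlinarith [ha1 n, ih.1, ih.2]
  have hq1 : ∀ n, 1 ≤ q (n+1) := fun n => (hq' n).2
  have hmono : ∀ n, q (n+1) ≤ q (n+2) := by
    intro n
    rw [qrec]
    nlinarith [ha1 n, (hq' n).1, hq1 n]
  refine ⟨hq1, hmono, ?_⟩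
  set E : ℕ → ℝ := fun n => α * (q n : ℝ) - (p n : ℝ) with hE
  have hErec : ∀ n, E (n+2) = (a (n+1):ℝ) * E (n+1) + E n := by
    intro n
    simp only [hE, prec n, qrec n]
    push_cast
    ring
  have key : ∀ n, x (n+1) * E (n+1) = - E n ∧
      |E (n+1)| * (x (n+1) * (q (n+1):ℝ) + (q n:ℝ)) = 1 := by
    intro n
    induction n with
    | zero =>
      have hf : 0 < x 0 - (⌊x 0⌋:ℝ) := hfrac 0
      have hx1e : x 1 = 1 / (x 0 - (⌊x 0⌋:ℝ)) := hxr 0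
      have hE1 : E 1 = x 0 - (⌊x 0⌋:ℝ) := by
        simp only [hE, q1, p1, ha 0, hx0]
        push_cast
        ring
      have hE0 : E 0 = -1 := by simp [hE, q0, p0]
      constructor
      · rw [hx1e, hE1, hE0, neg_neg, one_div, inv_mul_cancel₀ hf.ne']
      · rw [hx1e, hE1, abs_of_pos hf, q1, q0]
        push_cast
        rw [add_zero, mul_one, mul_one_div, div_self hf.ne']
    | succ n ih =>
      obtain ⟨ih1, ih2⟩ := ih
      have hf : 0 < x (n+1) - (⌊x (n+1)⌋:ℝ) := hfrac (n+1)
      have hx2e : x (n+2) = 1 / (x (n+1) - (⌊x (n+1)⌋:ℝ)) := hxr (n+1)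
      have haf : (a (n+1):ℝ) = x (n+1) - (x (n+1) - (⌊x (n+1)⌋:ℝ)) := by
        rw [ha]; ring
      have hEnew : E (n+2) = -(x (n+1) - (⌊x (n+1)⌋:ℝ)) * E (n+1) := by
        rw [hErec n, haf]
        have := ih1
        nlinarith [ih1]
      constructor
      · rw [hx2e, hEnew, neg_mul, mul_neg, neg_inj, one_div, ← mul_assoc,
          inv_mul_cancel₀ hf.ne', one_mul]
      · have hqcast : ((q (n+2)):ℝ) =
            (x (n+1) - (x (n+1) - (⌊x (n+1)⌋:ℝ))) * (q (n+1):ℝ) + (q n:ℝ) := by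
          rw [qrec]; push_cast; rw [← ha]; push_cast; ring
        rw [hEnew, abs_mul, abs_neg, abs_of_pos hf, hx2e, hqcast]
        exact cf_helper (x (n+1)) _ _ _ _ hf.ne' ih2
  intro n
  obtain ⟨-, key2⟩ := key n
  have hq2c : ((q (n+2)):ℝ) = (a (n+1):ℝ) * (q (n+1):ℝ) + (q n:ℝ) := by
    rw [qrec]; push_cast; ring
  have hD : ((q (n+2)):ℝ) < x (n+1) * (q (n+1):ℝ) + (q n:ℝ) := by
    rw [hq2c]
    have h1 : (a (n+1):ℝ) < x (n+1) := by
      rw [ha]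
      have := hfrac (n+1); linarith
    have h2 : (1:ℝ) ≤ (q (n+1):ℝ) := by exact_mod_cast hq1 n
    nlinarith
  have hQpos : (0:ℝ) < (q (n+2):ℝ) := by
    have := hq1 (n+1); exact_mod_cast by linarith
  have hEpos : 0 < |E (n+1)| := by
    by_contra hc
    push_neg at hc
    have : |E (n+1)| = 0 := le_antisymm hc (abs_nonneg _)
    rw [this, zero_mul] at key2
    norm_num at key2
  rw [lt_div_iff₀ hQpos]
  calc |E (n+1)| * (q (n+2):ℝ) < |E (n+1)| * (x (n+1) * (q (n+1):ℝ) + (q n:ℝ)) :=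
        by exact mul_lt_mul_of_pos_left hD hEpos
    _ = 1 := key2

/-- with `aₙ = q_k q′_{l−1} − q_{k−1} q′_l` etc. (shifted indexing:
`q_k = q (k+1)`), if the partial quotients of `α` in positions `k+1,…,k+m`
agree with those of `α'` in positions `l+1,…,l+m`, then
`|αα′aₙ − αbₙ − α′cₙ + dₙ| < 2/(q_{k+m} q′_{l+m})`. -/
theorem stmt9 (α α' : ℝ) (hα : Irrational α) (hα' : Irrational α')
    (a a' : ℕ → ℤ) (hcf : IsCFOf α a) (hcf' : IsCFOf α' a')
    (p q p' q' : ℕ → ℤ) (h : IsConvergentsOf a p q) (h' : IsConvergentsOf a' p' q')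
    (k l m : ℕ) (hm : 1 ≤ m)
    (hagree : ∀ i, 1 ≤ i → i ≤ m → a (k + i) = a' (l + i)) :
    |α * α' * ((q (k + 1) : ℝ) * (q' l : ℝ) - (q k : ℝ) * (q' (l + 1) : ℝ))
      - α * ((q (k + 1) : ℝ) * (p' l : ℝ) - (q k : ℝ) * (p' (l + 1) : ℝ))
      - α' * ((p (k + 1) : ℝ) * (q' l : ℝ) - (p k : ℝ) * (q' (l + 1) : ℝ))
      + ((p (k + 1) : ℝ) * (p' l : ℝ) - (p k : ℝ) * (p' (l + 1) : ℝ))|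
      < 2 / ((q (k + m + 1) : ℝ) * (q' (l + m + 1) : ℝ)) := by
  obtain ⟨hq1, hmono, hbound⟩ := cf_facts hα hcf h
  obtain ⟨hq1', hmono', hbound'⟩ := cf_facts hα' hcf' h'
  set E : ℕ → ℝ := fun n => α * (q n : ℝ) - (p n : ℝ) with hEdef
  set E' : ℕ → ℝ := fun n => α' * (q' n : ℝ) - (p' n : ℝ) with hE'def
  have hErec : ∀ n, E (n+2) = (a (n+1):ℝ) * E (n+1) + E n := by
    intro n
    simp only [hEdef, h.2.2.1 n, h.2.2.2.2.2 n]
    push_cast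
    ring
  have hE'rec : ∀ n, E' (n+2) = (a' (n+1):ℝ) * E' (n+1) + E' n := by
    intro n
    simp only [hE'def, h'.2.2.1 n, h'.2.2.2.2.2 n]
    push_cast
    ring
  -- the linear form equals E (k+1) * E' l - E k * E' (l+1)
  have hid : α * α' * ((q (k + 1) : ℝ) * (q' l : ℝ) - (q k : ℝ) * (q' (l + 1) : ℝ))
      - α * ((q (k + 1) : ℝ) * (p' l : ℝ) - (q k : ℝ) * (p' (l + 1) : ℝ))
      - α' * ((p (k + 1) : ℝ) * (q' l : ℝ) - (p k : ℝ) * (q' (l + 1) : ℝ))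
      + ((p (k + 1) : ℝ) * (p' l : ℝ) - (p k : ℝ) * (p' (l + 1) : ℝ))
      = E (k+1) * E' l - E k * E' (l+1) := by
    simp only [hEdef, hE'def]
    ring
  -- shift invariance
  have hshift : ∀ j, j ≤ m →
      |E (k+j+1) * E' (l+j) - E (k+j) * E' (l+j+1)|
        = |E (k+1) * E' l - E k * E' (l+1)| := by
    intro j hj
    induction j with
    | zero => rfl
    | succ j ih =>
      have hj' : j ≤ m := Nat.le_of_succ_le hj
      have hagr : (a (k+j+1) : ℝ) = (a' (l+j+1) : ℝ) := by
        have := hagree (j+1) (Nat.succ_le_succ (Nat.zero_le j)) hj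
        rw [show k + (j+1) = k + j + 1 by ring, show l + (j+1) = l + j + 1 by ring] at this
        exact_mod_cast this
      have hneg : E (k+(j+1)+1) * E' (l+(j+1)) - E (k+(j+1)) * E' (l+(j+1)+1)
          = -(E (k+j+1) * E' (l+j) - E (k+j) * E' (l+j+1)) := by
        have e1 : E (k+(j+1)+1) = (a (k+j+1):ℝ) * E (k+j+1) + E (k+j) := hErec (k+j)
        have e2 : E' (l+(j+1)+1) = (a' (l+j+1):ℝ) * E' (l+j+1) + E' (l+j) := hE'rec (l+j)
        have e3 : E (k+(j+1)) = E (k+j+1) := rfl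
        have e4 : E' (l+(j+1)) = E' (l+j+1) := rfl
        rw [e1, e2, e3, e4, hagr]
        ring
      rw [hneg, abs_neg, ih hj']
  -- conclude
  obtain ⟨m', rfl⟩ : ∃ m', m = m' + 1 := ⟨m - 1, by omega⟩
  rw [hid, ← hshift (m'+1) le_rfl]
  have b1 : |E (k+(m'+1)+1)| < 1 / ((q (k+m'+3)):ℝ) := hbound (k+m'+1)
  have b2 : |E' (l+(m'+1))| < 1 / ((q' (l+m'+2)):ℝ) := hbound' (l+m')
  have b3 : |E (k+(m'+1))| < 1 / ((q (k+m'+2)):ℝ) := hbound (k+m')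
  have b4 : |E' (l+(m'+1)+1)| < 1 / ((q' (l+m'+3)):ℝ) := hbound' (l+m'+1)
  have hQ : (0:ℝ) < ((q (k+m'+2)):ℝ) := by exact_mod_cast lt_of_lt_of_le one_pos (by exact_mod_cast hq1 (k+m'+1) : (1:ℝ) ≤ (q (k+m'+2):ℝ))
  have hQ' : (0:ℝ) < ((q' (l+m'+2)):ℝ) := by exact_mod_cast lt_of_lt_of_le one_pos (by exact_mod_cast hq1' (l+m'+1) : (1:ℝ) ≤ (q' (l+m'+2):ℝ))
  have hQ2 : ((q (k+m'+2)):ℝ) ≤ ((q (k+m'+3)):ℝ) := by exact_mod_cast hmono (k+m'+1)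
  have hQ2' : ((q' (l+m'+2)):ℝ) ≤ ((q' (l+m'+3)):ℝ) := by exact_mod_cast hmono' (l+m'+1)
  have hQ3 : (0:ℝ) < ((q (k+m'+3)):ℝ) := lt_of_lt_of_le hQ hQ2
  have hQ3' : (0:ℝ) < ((q' (l+m'+3)):ℝ) := lt_of_lt_of_le hQ' hQ2'
  have t1 : |E (k+(m'+1)+1) * E' (l+(m'+1))| < 1 / (((q (k+m'+2)):ℝ) * ((q' (l+m'+2)):ℝ)) := by
    rw [abs_mul]
    calc |E (k+(m'+1)+1)| * |E' (l+(m'+1))|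
        < (1 / ((q (k+m'+3)):ℝ)) * (1 / ((q' (l+m'+2)):ℝ)) :=
          mul_lt_mul'' b1 b2 (abs_nonneg _) (abs_nonneg _)
      _ ≤ (1 / ((q (k+m'+2)):ℝ)) * (1 / ((q' (l+m'+2)):ℝ)) := by
          apply mul_le_mul_of_nonneg_right _ (by positivity)
          exact one_div_le_one_div_of_le hQ hQ2
      _ = 1 / (((q (k+m'+2)):ℝ) * ((q' (l+m'+2)):ℝ)) := by rw [div_mul_div_comm, one_mul]
  have t2 : |E (k+(m'+1)) * E' (l+(m'+1)+1)| < 1 / (((q (k+m'+2)):ℝ) * ((q' (l+m'+2)):ℝ)) := by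
    rw [abs_mul]
    calc |E (k+(m'+1))| * |E' (l+(m'+1)+1)|
        < (1 / ((q (k+m'+2)):ℝ)) * (1 / ((q' (l+m'+3)):ℝ)) :=
          mul_lt_mul'' b3 b4 (abs_nonneg _) (abs_nonneg _)
      _ ≤ (1 / ((q (k+m'+2)):ℝ)) * (1 / ((q' (l+m'+2)):ℝ)) := by
          apply mul_le_mul_of_nonneg_left _ (by positivity)
          exact one_div_le_one_div_of_le hQ' hQ2'
      _ = 1 / (((q (k+m'+2)):ℝ) * ((q' (l+m'+2)):ℝ)) := by rw [div_mul_div_comm, one_mul]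
  have habs := abs_sub (E (k+(m'+1)+1) * E' (l+(m'+1))) (E (k+(m'+1)) * E' (l+(m'+1)+1))
  have hfin : ((q (k + (m'+1) + 1)):ℝ) = ((q (k+m'+2)):ℝ) := by norm_cast
  have hfin' : ((q' (l + (m'+1) + 1)):ℝ) = ((q' (l+m'+2)):ℝ) := by norm_cast
  rw [hfin, hfin']
  calc |E (k+(m'+1)+1) * E' (l+(m'+1)) - E (k+(m'+1)) * E' (l+(m'+1)+1)|
      ≤ |E (k+(m'+1)+1) * E' (l+(m'+1))| + |E (k+(m'+1)) * E' (l+(m'+1)+1)| := abs_sub _ _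
    _ < 1 / (((q (k+m'+2)):ℝ) * ((q' (l+m'+2)):ℝ)) + 1 / (((q (k+m'+2)):ℝ) * ((q' (l+m'+2)):ℝ)) :=
        add_lt_add t1 t2
    _ = 2 / (((q (k+m'+2)):ℝ) * ((q' (l+m'+2)):ℝ)) := by ring
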